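/- Let (Ω, 𝔉, P) be a probability space, M : Ω → ℝ a random variable, and C > 0, K > 0, t > 0 constants. Assume that for every θ ∈ ℝ, E[exp(θ M)] ≤ exp( C t ( e^{K|θ|} − 1 − K|θ| ) ). Define I_C(y) = (y/K)·log(1 + y/(C K)) − C·[ y/(C K) − log(1 + y/(C K)) ] for y ≥ 0. Then for every y ≥ 0, P( |M| ≥ t y ) ≤ 2 exp( − t I_C(y) ); moreover I_C(y) > 0 for every y > 0. -/

import Mathlib

open MeasureTheory Real

/-- The Cramér/Chernoff rate function appearing in the large deviation bound. -/
noncomputable def rateI (C K : ℝ) (y : ℝ) : ℝ :=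
  y / K * Real.log (1 + y / (C * K)) - C * (y / (C * K) - Real.log (1 + y / (C * K)))

/-- Chernoff-type large deviation bound: an exponential-moment estimate of
compound-Poisson type implies a two-sided tail bound with rate function `rateI C K`,
which is positive for `y > 0`. -/
theorem chernoff_tail_bound
    {Ω : Type*} [MeasurableSpace Ω] (P : Measure Ω) [IsProbabilityMeasure P]
    (M : Ω → ℝ) (hM : Measurable M)
    (C K t : ℝ) (hC : 0 < C) (hK : 0 < K) (ht : 0 < t)
    (hint : ∀ θ : ℝ, Integrable (fun ω => Real.exp (θ * M ω)) P)
    (hmgf : ∀ θ : ℝ, ∫ ω, Real.exp (θ * M ω) ∂P ≤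
      Real.exp (C * t * (Real.exp (K * |θ|) - 1 - K * |θ|))) :
    (∀ y : ℝ, 0 ≤ y →
      P {ω | t * y ≤ |M ω|} ≤ ENNReal.ofReal (2 * Real.exp (-t * rateI C K y))) ∧
    (∀ y : ℝ, 0 < y → 0 < rateI C K y) := by
  constructor
  · intro y hy
    set u : ℝ := y / (C * K) with hu
    have hu0 : 0 ≤ u := div_nonneg hy (by positivity)
    set θ : ℝ := Real.log (1 + u) / K with hθ
    have hlog0 : 0 ≤ Real.log (1 + u) := Real.log_nonneg (by linarith)
    have hθ0 : 0 ≤ θ := div_nonneg hlog0 hK.le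
    have hKθ : K * θ = Real.log (1 + u) := by rw [hθ]; field_simp
    have hexpKθ : Real.exp (K * θ) = 1 + u := by
      rw [hKθ, Real.exp_log (by linarith)]
    -- bound for each tail
    have key : ∀ X : Ω → ℝ, Integrable (fun ω => Real.exp (θ * X ω)) P →
        (∫ ω, Real.exp (θ * X ω) ∂P ≤
          Real.exp (C * t * (Real.exp (K * |θ|) - 1 - K * |θ|))) →
        (P {ω | t * y ≤ X ω}).toReal ≤ Real.exp (-t * rateI C K y) := by
      intro X hXint hXmgf
      have h1 := ProbabilityTheory.measure_ge_le_exp_mul_mgf (X := X) (μ := P)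
        (t * y) hθ0 hXint
      have h2 : ProbabilityTheory.mgf X P θ ≤
          Real.exp (C * t * (Real.exp (K * |θ|) - 1 - K * |θ|)) := hXmgf
      have habs : |θ| = θ := abs_of_nonneg hθ0
      calc (P {ω | t * y ≤ X ω}).toReal
          ≤ Real.exp (-θ * (t * y)) * ProbabilityTheory.mgf X P θ := h1
        _ ≤ Real.exp (-θ * (t * y)) *
            Real.exp (C * t * (Real.exp (K * |θ|) - 1 - K * |θ|)) := by
            exact mul_le_mul_of_nonneg_left h2 (Real.exp_nonneg _)
        _ = Real.exp (-t * rateI C K y) := by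
            rw [← Real.exp_add]
            congr 1
            rw [habs, hexpKθ, hKθ]
            have hyK : y / K = C * u := by
              rw [hu]; field_simp <;> ring
            simp only [rateI, ← hu, hyK]
            have : θ * y = C * u * Real.log (1 + u) := by
              rw [hθ]
              rw [div_mul_eq_mul_div, mul_comm (Real.log (1+u)) y, ← div_mul_eq_mul_div, hyK]
            nlinarith [this]
    have hA := key M (hint θ) (hmgf θ)
    have hintneg : Integrable (fun ω => Real.exp (θ * (-M) ω)) P := by
      simpa [mul_comm, neg_mul, mul_neg] using hint (-θ)
    have hB := key (fun ω => -M ω) hintneg (by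
      have := hmgf (-θ)
      simpa [mul_comm, neg_mul, mul_neg, abs_neg] using this)
    have hsub : {ω | t * y ≤ |M ω|} ⊆ {ω | t * y ≤ M ω} ∪ {ω | t * y ≤ -M ω} := by
      intro ω hω
      rcases abs_cases (M ω) with ⟨h, _⟩ | ⟨h, _⟩
      · left; simpa [h] using hω
      · right; simpa [h] using hω
    have hmeas1 : MeasurableSet {ω | t * y ≤ M ω} := measurableSet_le measurable_const hM
    have hmeas2 : MeasurableSet {ω | t * y ≤ -M ω} := measurableSet_le measurable_const hM.neg
    calc P {ω | t * y ≤ |M ω|}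
        ≤ P ({ω | t * y ≤ M ω} ∪ {ω | t * y ≤ -M ω}) := measure_mono hsub
      _ ≤ P {ω | t * y ≤ M ω} + P {ω | t * y ≤ -M ω} := measure_union_le _ _
      _ ≤ ENNReal.ofReal (2 * Real.exp (-t * rateI C K y)) := by
          calc P {ω | t * y ≤ M ω} + P {ω | t * y ≤ -M ω}
              = ENNReal.ofReal ((P {ω | t * y ≤ M ω}).toReal
                + (P {ω | t * y ≤ -M ω}).toReal) := by
                rw [ENNReal.ofReal_add ENNReal.toReal_nonneg ENNReal.toReal_nonneg,
                  ENNReal.ofReal_toReal (measure_ne_top _ _),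
                  ENNReal.ofReal_toReal (measure_ne_top _ _)]
            _ ≤ _ := ENNReal.ofReal_le_ofReal (by linarith)
  · intro y hy
    set u : ℝ := y / (C * K) with hu
    have hu0 : 0 < u := div_pos hy (by positivity)
    have hlog : u / (1 + u) < Real.log (1 + u) := by
      have h := Real.log_lt_sub_one_of_pos (x := 1 / (1 + u)) (by positivity)
        (by
          intro h
          have : (1 : ℝ) + u = 1 := by
            field_simp at h
            linarith
          linarith)
      rw [Real.log_div one_ne_zero (by positivity), Real.log_one] at h
      have h1u : (0 : ℝ) < 1 + u := by linarith
      rw [div_lt_iff₀ h1u]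
      nlinarith [mul_lt_mul_of_pos_right h h1u, one_div_mul_cancel h1u.ne']
    have hkey : u < (1 + u) * Real.log (1 + u) := by
      have h1u : (0 : ℝ) < 1 + u := by linarith
      calc u = (u / (1 + u)) * (1 + u) := by field_simp
        _ < Real.log (1 + u) * (1 + u) := by
            exact mul_lt_mul_of_pos_right hlog h1u
        _ = (1 + u) * Real.log (1 + u) := by ring
    have hyK : y / K = C * u := by
      rw [hu]; field_simp <;> ring
    have : rateI C K y = C * ((1 + u) * Real.log (1 + u) - u) := by
      simp only [rateI, ← hu, hyK]
      ring
    rw [this]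
    have : (0 : ℝ) < (1 + u) * Real.log (1 + u) - u := by linarith
    positivity
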